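/- There exists a constant C > 0, depending only on w_- and w_+, such that for all t > 0, δ > 0 and p ∈ [1, ∞]: ‖∂_x w^r_δ(·,t)‖_{L^p(ℝ)} ≤ C (w_+ − w_-)^{1/p} (δ + t)^{−1 + 1/p}. -/

import Mathlib

open MeasureTheory Set Filter
open scoped ENNReal Topology

lemma my_tanh_hasDerivAt (x : ℝ) : HasDerivAt Real.tanh (1 / Real.cosh x ^ 2) x := by
  have h := (Real.hasDerivAt_sinh x).div (Real.hasDerivAt_cosh x)
    (ne_of_gt (Real.cosh_pos x))
  have heq : Real.tanh = fun y => Real.sinh y / Real.cosh y :=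
    funext fun y => Real.tanh_eq_sinh_div_cosh y
  rw [heq]
  refine h.congr_deriv ?_
  have := Real.cosh_sq_sub_sinh_sq x
  field_simp
  nlinarith [this]

lemma my_tanh_bounds (x : ℝ) : -1 < Real.tanh x ∧ Real.tanh x < 1 := by
  have hc := Real.cosh_pos x
  have h1 := Real.sinh_add_cosh x
  have h2 := Real.cosh_sub_sinh x
  have e1 := Real.exp_pos x
  have e2 := Real.exp_pos (-x)
  rw [Real.tanh_eq_sinh_div_cosh]
  constructor
  · rw [lt_div_iff₀ hc]; nlinarith
  · rw [div_lt_one hc]; nlinarith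

/-- the L^p bound on the first spatial derivative of the Burgers
solution: ‖∂ₓ w^r_δ(·,t)‖_{L^p} ≤ C (w₊−w₋)^{1/p} (δ+t)^{−1+1/p} for all t > 0,
δ > 0 and p ∈ [1,∞], with C depending only on w₋, w₊. -/
theorem burgers_first_derivative_Lp_bound (wm wp : ℝ) (hw : wm < wp) :
    ∃ C > (0 : ℝ), ∀ δ : ℝ, 0 < δ →
      ∀ wδ : ℝ → ℝ,
        (∀ x, wδ x = (wp + wm) / 2 + (wp - wm) / 2 * Real.tanh (x / δ)) →
      ∀ x₀ : ℝ → ℝ → ℝ,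
        (∀ x t : ℝ, 0 ≤ t → x₀ x t + wδ (x₀ x t) * t = x) →
      ∀ w : ℝ → ℝ → ℝ,
        (∀ x t : ℝ, 0 ≤ t → w x t = wδ (x₀ x t)) →
      ∀ t : ℝ, 0 < t → ∀ p : ℝ≥0∞, 1 ≤ p →
        eLpNorm (fun x => deriv (fun z => w z t) x) p volume
          ≤ ENNReal.ofReal
              (C * (wp - wm) ^ (1 / p.toReal) * (δ + t) ^ (-1 + 1 / p.toReal)) := by
  set d : ℝ := (wp - wm) / 2 with hd_def
  have hd : 0 < d := by simp only [hd_def]; linarith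
  set A : ℝ := max 1 d with hA_def
  have hA1 : (1 : ℝ) ≤ A := le_max_left _ _
  have hAd : d ≤ A := le_max_right _ _
  have hA0 : 0 < A := lt_of_lt_of_le one_pos hA1
  refine ⟨A, hA0, ?_⟩
  intro δ hδ wδ hwδ x₀ hx₀ w hw t ht p hp
  have hδt : (0 : ℝ) < δ + t := by linarith
  -- derivative of wδ
  set k : ℝ → ℝ := fun u => d / δ / Real.cosh (u / δ) ^ 2 with hk_def
  have hk_deriv : ∀ u, HasDerivAt wδ (k u) u := by
    intro u
    have h1 : HasDerivAt (fun v : ℝ => v / δ) (1 / δ) u := by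
      simpa using (hasDerivAt_id u).div_const δ
    have h2 := (my_tanh_hasDerivAt (u / δ)).comp u h1
    have h3 := (h2.const_mul d).const_add ((wp + wm) / 2)
    have heq : wδ = fun v => (wp + wm) / 2 + d * Real.tanh (v / δ) :=
      funext fun v => hwδ v
    rw [heq]
    refine h3.congr_deriv ?_
    simp only [hk_def]
    field_simp
  have hk_pos : ∀ u, 0 < k u := fun u =>
    div_pos (div_pos hd hδ) (pow_pos (Real.cosh_pos _) 2)
  have hk_le : ∀ u, k u ≤ d / δ := by
    intro u
    have h1 : (1 : ℝ) ≤ Real.cosh (u / δ) ^ 2 := by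
      nlinarith [Real.one_le_cosh (u / δ)]
    exact div_le_self (div_pos hd hδ).le h1
  have hwlt : ∀ u, wm < wδ u ∧ wδ u < wp := by
    intro u
    have := my_tanh_bounds (u / δ)
    rw [hwδ u]
    constructor <;> nlinarith [this.1, this.2]
  -- the function F and its inverse y
  set F : ℝ → ℝ := fun u => u + wδ u * t with hF_def
  have hF_deriv : ∀ u, HasDerivAt F (1 + k u * t) u := fun u =>
    (hasDerivAt_id u).add ((hk_deriv u).mul_const t)
  have hF_pos : ∀ u, 0 < 1 + k u * t := fun u => by
    have := hk_pos u; nlinarith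
  have hF_mono : StrictMono F :=
    strictMono_of_deriv_pos fun u => by
      rw [(hF_deriv u).deriv]; exact hF_pos u
  set y : ℝ → ℝ := fun x => x₀ x t with hy_def
  have hFy : ∀ x, F (y x) = x := fun x => hx₀ x t ht.le
  have hyF : ∀ u, y (F u) = u := fun u => hF_mono.injective (hFy (F u))
  have hy_surj : Function.Surjective y := fun u => ⟨F u, hyF u⟩
  have hy_mono : StrictMono y := fun a b hab =>
    hF_mono.lt_iff_lt.mp (by rw [hFy a, hFy b]; exact hab)
  have hy_cont : Continuous y := by
    have h := OrderIso.continuous (StrictMono.orderIsoOfSurjective y hy_mono hy_surj)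
    rwa [StrictMono.coe_orderIsoOfSurjective] at h
  have hy_deriv : ∀ x, HasDerivAt y (1 + k (y x) * t)⁻¹ x := fun x =>
    HasDerivAt.of_local_left_inverse hy_cont.continuousAt (hF_deriv (y x))
      (ne_of_gt (hF_pos (y x))) (Filter.Eventually.of_forall hFy)
  -- the solution profile h and its derivative g
  set g : ℝ → ℝ := fun x => k (y x) * (1 + k (y x) * t)⁻¹ with hg_def
  set h : ℝ → ℝ := fun x => wδ (y x) with hh_def
  have hh_deriv : ∀ x, HasDerivAt h (g x) x := fun x =>
    (hk_deriv (y x)).comp x (hy_deriv x)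
  have hw_eq : (fun z => w z t) = h := funext fun z => by
    simp only [hh_def, hy_def]; exact hw z t ht.le
  have hderiv_eq : (fun x => deriv (fun z => w z t) x) = g := by
    funext x
    rw [hw_eq]
    exact (hh_deriv x).deriv
  have hg_pos : ∀ x, 0 < g x := fun x =>
    mul_pos (hk_pos _) (inv_pos.2 (hF_pos (y x)))
  -- the pointwise bound
  set M : ℝ := A / (δ + t) with hM_def
  have hM_pos : 0 < M := div_pos hA0 hδt
  have hg_le : ∀ x, g x ≤ M := by
    intro x
    have hk1 := hk_pos (y x)
    have hk2 := hk_le (y x)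
    have hden : 0 < δ + d * t := by nlinarith
    have step1 : g x ≤ d / (δ + d * t) := by
      rw [show g x = k (y x) * (1 + k (y x) * t)⁻¹ from rfl, ← div_eq_mul_inv,
        div_le_div_iff₀ (hF_pos (y x)) hden]
      have hkd : k (y x) * δ ≤ d := by
        calc k (y x) * δ ≤ d / δ * δ := by nlinarith
          _ = d := by field_simp
      nlinarith [hk1, ht.le]
    refine step1.trans ?_
    rw [hM_def, div_le_div_iff₀ hden hδt]
    have e1 : d * δ ≤ A * δ := by nlinarith
    have e2 : d * t ≤ A * (d * t) := le_mul_of_one_le_left (by positivity) hA1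
    nlinarith
  -- continuity of g
  have hk_cont : Continuous k := by
    apply continuous_const.div
    · exact (Real.continuous_cosh.comp (continuous_id.div_const δ)).pow 2
    · exact fun u => ne_of_gt (pow_pos (Real.cosh_pos _) 2)
  have hg_cont : Continuous g := by
    apply (hk_cont.comp hy_cont).mul
    apply Continuous.inv₀
    · exact continuous_const.add ((hk_cont.comp hy_cont).mul continuous_const)
    · exact fun x => ne_of_gt (hF_pos (y x))
  -- monotonicity and limits of h
  have hwδ_mono : StrictMono wδ :=
    strictMono_of_deriv_pos fun u => by rw [(hk_deriv u).deriv]; exact hk_pos u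
  have hh_mono : Monotone h := ((hwδ_mono.comp hy_mono)).monotone
  have hbddA : BddAbove (Set.range h) := ⟨wp, by rintro _ ⟨x, rfl⟩; exact (hwlt _).2.le⟩
  have hbddB : BddBelow (Set.range h) := ⟨wm, by rintro _ ⟨x, rfl⟩; exact (hwlt _).1.le⟩
  have htop : Tendsto h atTop (𝓝 (⨆ x, h x)) := tendsto_atTop_ciSup hh_mono hbddA
  have hbot : Tendsto h atBot (𝓝 (⨅ x, h x)) := tendsto_atBot_ciInf hh_mono hbddB
  have hsup_le : (⨆ x, h x) ≤ wp := ciSup_le fun x => (hwlt _).2.le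
  have hinf_ge : wm ≤ ⨅ x, h x := le_ciInf fun x => (hwlt _).1.le
  -- integrability of g
  have hint_Ioi : IntegrableOn g (Ioi 0) volume :=
    integrableOn_Ioi_deriv_of_nonneg' (fun x _ => hh_deriv x)
      (fun x _ => (hg_pos x).le) htop
  have hint_Iic : IntegrableOn g (Iic 0) volume := by
    apply integrableOn_Iic_of_intervalIntegral_norm_bounded (wp - wm) 0
      (a := fun n : ℕ => -(n : ℝ)) (l := atTop)
      (fun n => (hg_cont.integrableOn_Ioc))
      (tendsto_neg_atBot_iff.mpr tendsto_natCast_atTop_atTop)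
    filter_upwards with n
    have hnorm : ∀ x, ‖g x‖ = g x := fun x => Real.norm_of_nonneg (hg_pos x).le
    simp only [hnorm]
    have heq2 : ∫ x in -(n : ℝ)..0, g x = h 0 - h (-(n : ℝ)) :=
      intervalIntegral.integral_eq_sub_of_hasDerivAt (fun x _ => hh_deriv x)
        (hg_cont.intervalIntegrable _ _)
    rw [heq2]
    have hb1 : h 0 < wp := (hwlt (y 0)).2
    have hb2 : wm < h (-(n : ℝ)) := (hwlt (y (-(n : ℝ)))).1
    linarith
  have hg_int : Integrable g := by
    have hu := hint_Iic.union hint_Ioi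
    rwa [Iic_union_Ioi, integrableOn_univ] at hu
  have hInt_eq : ∫ x, g x = (⨆ x, h x) - ⨅ x, h x :=
    integral_of_hasDerivAt_of_tendsto hh_deriv hg_int hbot htop
  have hInt_le : ∫ x, g x ≤ wp - wm := by rw [hInt_eq]; linarith
  have hlint : ∫⁻ x, ENNReal.ofReal (g x) ≤ ENNReal.ofReal (wp - wm) := by
    rw [← ofReal_integral_eq_lintegral_ofReal hg_int
      (ae_of_all _ fun x => (hg_pos x).le)]
    exact ENNReal.ofReal_le_ofReal hInt_le
  -- now split on p = ∞
  rcases eq_or_ne p ⊤ with hptop | hpne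
  · subst hptop
    rw [hderiv_eq, eLpNorm_exponent_top]
    have hR : A * (wp - wm) ^ (1 / (⊤ : ℝ≥0∞).toReal)
        * (δ + t) ^ (-1 + 1 / (⊤ : ℝ≥0∞).toReal) = M := by
      rw [hM_def]
      simp only [ENNReal.toReal_top, div_zero, Real.rpow_zero, mul_one, add_zero]
      rw [Real.rpow_neg_one, div_eq_mul_inv]
    rw [hR]
    exact eLpNormEssSup_le_of_ae_bound (C := M) (ae_of_all _ fun x => by
      rw [Real.norm_of_nonneg (hg_pos x).le]; exact hg_le x)
  · set q : ℝ := p.toReal with hq_def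
    have hp0 : p ≠ 0 := (lt_of_lt_of_le zero_lt_one hp).ne'
    have hq1 : 1 ≤ q := by
      rw [← ENNReal.toReal_one]
      exact ENNReal.toReal_mono hpne hp
    have hq0 : 0 < q := lt_of_lt_of_le one_pos hq1
    have h1q0 : 0 < 1 / q := by positivity
    have h1q1 : 1 / q ≤ 1 := by rw [div_le_one hq0]; exact hq1
    rw [hderiv_eq, eLpNorm_eq_lintegral_rpow_enorm_toReal hp0 hpne]
    have hpt : ∀ x, ‖g x‖ₑ ^ q
        ≤ ENNReal.ofReal M ^ (q - 1) * ENNReal.ofReal (g x) := by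
      intro x
      rw [Real.enorm_eq_ofReal (hg_pos x).le]
      have hne0 : ENNReal.ofReal (g x) ≠ 0 := (ENNReal.ofReal_pos.mpr (hg_pos x)).ne'
      have h1 : ENNReal.ofReal (g x) ^ q
          = ENNReal.ofReal (g x) ^ (q - 1) * ENNReal.ofReal (g x) ^ (1 : ℝ) := by
        rw [← ENNReal.rpow_add _ _ hne0 ENNReal.ofReal_ne_top]
        norm_num
      rw [h1, ENNReal.rpow_one]
      exact mul_le_mul_left
        (ENNReal.rpow_le_rpow (ENNReal.ofReal_le_ofReal (hg_le x)) (by linarith)) _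
    have hlint2 : ∫⁻ x, ‖g x‖ₑ ^ q
        ≤ ENNReal.ofReal M ^ (q - 1) * ENNReal.ofReal (wp - wm) := by
      calc ∫⁻ x, ‖g x‖ₑ ^ q
          ≤ ∫⁻ x, ENNReal.ofReal M ^ (q - 1) * ENNReal.ofReal (g x) :=
            lintegral_mono hpt
        _ = ENNReal.ofReal M ^ (q - 1) * ∫⁻ x, ENNReal.ofReal (g x) :=
            lintegral_const_mul' _ _
              (ENNReal.rpow_ne_top_of_nonneg (by linarith) ENNReal.ofReal_ne_top)
        _ ≤ _ := mul_le_mul_right hlint _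
    refine le_trans (ENNReal.rpow_le_rpow hlint2 h1q0.le) ?_
    have hwm0 : (0 : ℝ) < wp - wm := by linarith
    have key : (ENNReal.ofReal M ^ (q - 1) * ENNReal.ofReal (wp - wm)) ^ (1 / q)
        = ENNReal.ofReal (M ^ (1 - 1 / q) * (wp - wm) ^ (1 / q)) := by
      rw [ENNReal.mul_rpow_of_nonneg _ _ h1q0.le, ← ENNReal.rpow_mul,
        show (q - 1) * (1 / q) = 1 - 1 / q by field_simp,
        ENNReal.ofReal_rpow_of_pos hM_pos, ENNReal.ofReal_rpow_of_pos hwm0,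
        ← ENNReal.ofReal_mul (Real.rpow_nonneg hM_pos.le _)]
    rw [key]
    apply ENNReal.ofReal_le_ofReal
    have hMpow : M ^ (1 - 1 / q) = A ^ (1 - 1 / q) * (δ + t) ^ (-1 + 1 / q) := by
      rw [hM_def, Real.div_rpow hA0.le hδt.le, div_eq_mul_inv,
        ← Real.rpow_neg hδt.le, show -(1 - 1 / q) = -1 + 1 / q by ring]
    have hApow : A ^ (1 - 1 / q) ≤ A := by
      calc A ^ (1 - 1 / q) ≤ A ^ (1 : ℝ) :=
            Real.rpow_le_rpow_of_exponent_le hA1 (by linarith)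
        _ = A := Real.rpow_one A
    calc M ^ (1 - 1 / q) * (wp - wm) ^ (1 / q)
        = A ^ (1 - 1 / q) * (δ + t) ^ (-1 + 1 / q) * (wp - wm) ^ (1 / q) := by
          rw [hMpow]
      _ ≤ A * (δ + t) ^ (-1 + 1 / q) * (wp - wm) ^ (1 / q) := by
          apply mul_le_mul_of_nonneg_right _ (Real.rpow_nonneg hwm0.le _)
          exact mul_le_mul_of_nonneg_right hApow (Real.rpow_nonneg hδt.le _)
      _ = A * (wp - wm) ^ (1 / q) * (δ + t) ^ (-1 + 1 / q) := by ring
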